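/- Let P(λ) = (1-λ)A + λC + λ(1-λ)B be a real quadratic polynomial in λ. Then P(λ) ≤ 0 for all λ in [0,1] if and only if there exist a positive semidefinite 2×2 real symmetric matrix M = [[M11, M12],[M12, M22]] and a real K ≥ 0 such that M11 = -A, 2M12 + K = A - C - B, and M22 - K = B (equivalently P(λ) = -(1, λ) M (1, λ)^T - λ(1-λ)K). -/

import Mathlib

set_option maxHeartbeats 1000000

theorem stmt11 (A B C : ℝ) :
    (∀ lam ∈ Set.Icc (0 : ℝ) 1, (1 - lam) * A + lam * C + lam * (1 - lam) * B ≤ 0) ↔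
    ∃ (M11 M12 M22 K : ℝ), (!![M11, M12; M12, M22] : Matrix (Fin 2) (Fin 2) ℝ).PosSemidef ∧
      0 ≤ K ∧ M11 = -A ∧ 2 * M12 + K = A - C - B ∧ M22 - K = B := by
  constructor
  · intro h
    have hA : A ≤ 0 := by have := h 0 (by norm_num); linarith
    have hC : C ≤ 0 := by have := h 1 (by norm_num); linarith
    set a := -A with ha
    set c := -C with hc
    have ha0 : 0 ≤ a := by linarith
    have hc0 : 0 ≤ c := by linarith
    have hsa : Real.sqrt a ^ 2 = a := Real.sq_sqrt ha0
    have hsc : Real.sqrt c ^ 2 = c := Real.sq_sqrt hc0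
    have hsa0 : 0 ≤ Real.sqrt a := Real.sqrt_nonneg a
    have hsc0 : 0 ≤ Real.sqrt c := Real.sqrt_nonneg c
    set s : ℝ := Real.sqrt a + Real.sqrt c with hs
    have hs2 : s ^ 2 = a + c + 2 * (Real.sqrt a * Real.sqrt c) := by
      rw [hs]; nlinarith [hsa, hsc]
    -- key: B ≤ s^2
    have hB : B ≤ s ^ 2 := by
      by_cases hd : B ≤ a + c
      · nlinarith [mul_nonneg hsa0 hsc0]
      · push_neg at hd
        have hBpos : 0 < B := by nlinarith
        set t : ℝ := (a - c + B) / (2 * B) with htdef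
        have h2 : 2 * B * t = a - c + B := by
          rw [htdef]; field_simp
        have hl : t ∈ Set.Icc (0:ℝ) 1 := by
          constructor
          · apply div_nonneg; nlinarith; linarith
          · rw [div_le_one (by linarith)]; nlinarith
        have hp := h t hl
        have key : 4 * B * ((1 - t) * A + t * C + t * (1 - t) * B) =
            4 * A * B + 2 * (a - c + B) * (C - A + B) - (a - c + B) ^ 2 := by
          linear_combination (2 * (C - A + B) - (2 * B * t + (a - c + B))) * h2
        have hq : 4 * A * B + 2 * (a - c + B) * (C - A + B) - (a - c + B) ^ 2 ≤ 0 := by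
          nlinarith [mul_nonneg (by positivity : (0:ℝ) ≤ 4 * B) (neg_nonneg.2 hp)]
        have hd2 : (B - a - c) ^ 2 ≤ 4 * (a * c) := by nlinarith [hq]
        have hle : B - a - c ≤ 2 * (Real.sqrt a * Real.sqrt c) := by
          have h1 : B - a - c = Real.sqrt ((B - a - c) ^ 2) := by
            rw [Real.sqrt_sq (by linarith)]
          rw [h1]
          calc Real.sqrt ((B - a - c) ^ 2) ≤ Real.sqrt (4 * (a * c)) :=
                Real.sqrt_le_sqrt hd2
            _ = 2 * (Real.sqrt a * Real.sqrt c) := by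
                rw [show (4 : ℝ) * (a * c) = (2 * (Real.sqrt a * Real.sqrt c)) ^ 2 by
                  nlinarith [hsa, hsc]]
                exact Real.sqrt_sq (by positivity)
        nlinarith
    refine ⟨a, -(Real.sqrt a * s), s ^ 2, s ^ 2 - B, ?_, by linarith, by ring, ?_, by ring⟩
    · rw [Matrix.posSemidef_iff_dotProduct_mulVec]; constructor
      · ext i j
        fin_cases i <;> fin_cases j <;>
          simp [Matrix.conjTranspose, Matrix.transpose, Matrix.vecHead, Matrix.vecTail]
      · intro x
        simp [Matrix.mulVec, dotProduct, Fin.sum_univ_two]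
        nlinarith [sq_nonneg (Real.sqrt a * x 0 - s * x 1), hsa, sq_nonneg (x 0), sq_nonneg (x 1)]
    · have e : 2 * -(Real.sqrt a * s) + (s ^ 2 - B) =
          Real.sqrt c ^ 2 - Real.sqrt a ^ 2 - B := by rw [hs]; ring
      rw [e, hsa, hsc, ha, hc]; ring
  · rintro ⟨M11, M12, M22, K, hM, hK, h1, h2, h3⟩
    intro lam hlam
    obtain ⟨hl0, hl1⟩ := hlam
    have hq := hM.dotProduct_mulVec_nonneg ![1, lam]
    simp [Matrix.mulVec, dotProduct, Fin.sum_univ_two] at hq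
    have hA : A = -M11 := by linarith
    have hB : B = M22 - K := by linarith
    have hC : C = -M11 - 2 * M12 - M22 := by linarith
    rw [hA, hB, hC]
    nlinarith [hq, mul_nonneg (mul_nonneg hl0 (by linarith : (0:ℝ) ≤ 1 - lam)) hK]
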